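/- Let p be a prime and f : ℤ_p → ℤ_p a 1-Lipschitz function whose set S(f) of sections at all vertices (k, m), k ≥ 0, 0 ≤ m < p^k, is finite. Then f maps elements with eventually periodic digit expansion to elements with eventually periodic digit expansion: for every x ∈ ℤ_p whose digit expansion is eventually periodic, the digit expansion of f(x) is eventually periodic. -/

import Mathlib

/-- `h` is the section of `f` at the vertex `(k, m)`: for some integer `0 ≤ r < p^k`,
`f(m + p^k·y) = r + p^k·h(y)` for all `y ∈ ℤ_p`. -/
def IsSection (p : ℕ) [Fact p.Prime] (f h : PadicInt p → PadicInt p) (k m : ℕ) : Prop :=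
  ∃ r : ℕ, r < p ^ k ∧ ∀ y : PadicInt p,
    f ((m : PadicInt p) + (p : PadicInt p) ^ k * y)
      = (r : PadicInt p) + (p : PadicInt p) ^ k * h y

/-- The set `S(f)` of all sections of `f` at vertices `(k, m)`, `k ≥ 0`, `0 ≤ m < p^k`. -/
def SectionsSet (p : ℕ) [Fact p.Prime] (f : PadicInt p → PadicInt p) :
    Set (PadicInt p → PadicInt p) :=
  {h | ∃ k m : ℕ, m < p ^ k ∧ IsSection p f h k m}

/-- `x ∈ ℤ_p` has an eventually periodic digit expansion. -/
def HasEventuallyPeriodicDigits (p : ℕ) [Fact p.Prime] (x : PadicInt p) : Prop :=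
  ∃ a : ℕ → ℕ, (∀ i, a i < p) ∧
    x = (∑' i : ℕ, (a i : PadicInt p) * (p : PadicInt p) ^ i) ∧
    ∃ l m : ℕ, 1 ≤ m ∧ ∀ i : ℕ, l ≤ i → a (i + m) = a i

open Finset Filter

section FSPAux

variable {p : ℕ} [hp : Fact p.Prime]

omit hp in
lemma FSP.mod_pow_succ (s n : ℕ) : s % p ^ (n+1) = s % p ^ n + p ^ n * (s / p ^ n % p) := by
  have h1 : s % p ^ (n+1) / p ^ n = s / p ^ n % p := by
    rw [pow_succ]; exact Nat.mod_mul_right_div_self s (p^n) p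
  have h2 : s % p ^ (n+1) % p ^ n = s % p ^ n :=
    Nat.mod_mod_of_dvd s (pow_dvd_pow p (Nat.le_succ n))
  have h3 := Nat.mod_add_div (s % p ^ (n+1)) (p ^ n)
  rw [h1, h2] at h3
  omega

omit hp in
lemma FSP.digit_sum_mod (s n : ℕ) :
    ∑ j ∈ range n, s / p ^ j % p * p ^ j = s % p ^ n := by
  induction n with
  | zero => simp [Nat.mod_one]
  | succ n ih =>
    rw [Finset.sum_range_succ, ih, FSP.mod_pow_succ, Nat.mul_comm]

lemma FSP.digit_sum_lt (a : ℕ → ℕ) (ha : ∀ i, a i < p) (n : ℕ) :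
    ∑ j ∈ range n, a j * p ^ j < p ^ n := by
  induction n with
  | zero => simp
  | succ n ih =>
    rw [Finset.sum_range_succ, pow_succ]
    have h1 : a n * p ^ n ≤ (p - 1) * p ^ n :=
      Nat.mul_le_mul_right _ (by have := ha n; omega)
    have hp1 : 1 ≤ p := hp.out.one_lt.le
    have h2 : (p - 1) * p ^ n + p ^ n = p ^ n * p := by
      calc (p-1)*p^n + p^n = ((p-1)+1)*p^n := by ring
        _ = p * p^n := by rw [Nat.sub_add_cancel hp1]
        _ = p^n * p := by ring
    omega

lemma FSP.dvd_iff_norm (n : ℕ) (x : ℤ_[p]) :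
    (p : ℤ_[p]) ^ n ∣ x ↔ ‖x‖ ≤ (p : ℝ) ^ (-n : ℤ) := by
  rw [PadicInt.norm_le_pow_iff_mem_span_pow, Ideal.mem_span_singleton]

lemma FSP.summable_digits (a : ℕ → ℕ) :
    Summable (fun i => (a i : ℤ_[p]) * (p : ℤ_[p]) ^ i) := by
  have hp1 : (1 : ℝ) < p := Nat.one_lt_cast.mpr hp.out.one_lt
  apply Summable.of_norm_bounded (g := fun i => ((p : ℝ)⁻¹) ^ i)
  · exact summable_geometric_of_lt_one (by positivity)
      ((inv_lt_one_iff₀).mpr (Or.inr hp1))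
  · intro i
    calc ‖(a i : ℤ_[p]) * (p:ℤ_[p]) ^ i‖ ≤ ‖(a i : ℤ_[p])‖ * ‖(p:ℤ_[p]) ^ i‖ := norm_mul_le _ _
      _ ≤ 1 * ‖(p:ℤ_[p]) ^ i‖ := by
          gcongr; exact PadicInt.norm_le_one _
      _ = (p : ℝ) ^ (-i : ℤ) := by rw [one_mul, PadicInt.norm_p_pow]
      _ = ((p:ℝ)⁻¹) ^ i := by rw [zpow_neg, inv_pow, zpow_natCast]

lemma FSP.eq_tsum_of_dvd (a : ℕ → ℕ) (w : ℤ_[p])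
    (h : ∀ n, (p : ℤ_[p]) ^ n ∣ w - ∑ i ∈ range n, (a i : ℤ_[p]) * (p : ℤ_[p]) ^ i) :
    w = ∑' i, (a i : ℤ_[p]) * (p : ℤ_[p]) ^ i := by
  have hp1 : (1 : ℝ) < p := Nat.one_lt_cast.mpr hp.out.one_lt
  have hs := FSP.summable_digits (p := p) a
  have h1 : Tendsto (fun n => ∑ i ∈ range n, (a i : ℤ_[p]) * (p : ℤ_[p]) ^ i) atTop
      (nhds (∑' i, (a i : ℤ_[p]) * (p : ℤ_[p]) ^ i)) := hs.hasSum.tendsto_sum_nat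
  have h2 : Tendsto (fun n => ∑ i ∈ range n, (a i : ℤ_[p]) * (p : ℤ_[p]) ^ i) atTop (nhds w) := by
    rw [tendsto_iff_norm_sub_tendsto_zero]
    apply squeeze_zero (fun n => norm_nonneg _) (g := fun n => ((p:ℝ)⁻¹) ^ n)
    · intro n
      rw [← norm_neg, neg_sub]
      calc ‖w - ∑ i ∈ range n, (a i : ℤ_[p]) * (p : ℤ_[p]) ^ i‖ ≤ (p : ℝ) ^ (-n : ℤ) :=
            (FSP.dvd_iff_norm n _).mp (h n)
        _ = ((p:ℝ)⁻¹) ^ n := by rw [zpow_neg, inv_pow, zpow_natCast]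
    · exact tendsto_pow_atTop_nhds_zero_of_lt_one (by positivity)
        ((inv_lt_one_iff₀).mpr (Or.inr hp1))
  exact tendsto_nhds_unique h2 h1

lemma FSP.exists_section (f : ℤ_[p] → ℤ_[p])
    (hf : ∀ x y : ℤ_[p], ‖f x - f y‖ ≤ ‖x - y‖) (k M : ℕ) :
    ∃ h : ℤ_[p] → ℤ_[p], IsSection p f h k M := by
  set r := (f M).appr k with hr_def
  have hr : r < p ^ k := PadicInt.appr_lt _ _
  have hdvd : ∀ y : ℤ_[p], (p : ℤ_[p]) ^ k ∣ f ((M : ℤ_[p]) + (p : ℤ_[p]) ^ k * y) - r := by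
    intro y
    have d1 : (p : ℤ_[p]) ^ k ∣ f ((M : ℤ_[p]) + (p : ℤ_[p]) ^ k * y) - f M := by
      rw [FSP.dvd_iff_norm]
      calc ‖f ((M : ℤ_[p]) + (p : ℤ_[p]) ^ k * y) - f M‖
          ≤ ‖((M : ℤ_[p]) + (p : ℤ_[p]) ^ k * y) - M‖ := hf _ _
        _ = ‖(p : ℤ_[p]) ^ k * y‖ := by ring_nf
        _ ≤ ‖(p : ℤ_[p]) ^ k‖ * ‖y‖ := norm_mul_le _ _
        _ ≤ ‖(p : ℤ_[p]) ^ k‖ * 1 := by gcongr; exact PadicInt.norm_le_one _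
        _ = (p : ℝ) ^ (-k : ℤ) := by rw [mul_one, PadicInt.norm_p_pow]
    have d2 : (p : ℤ_[p]) ^ k ∣ f M - r :=
      Ideal.mem_span_singleton.mp (PadicInt.appr_spec k (f M))
    have e : f ((M : ℤ_[p]) + (p : ℤ_[p]) ^ k * y) - r
        = (f ((M : ℤ_[p]) + (p : ℤ_[p]) ^ k * y) - f M) + (f M - r) := by ring
    rw [e]; exact dvd_add d1 d2
  refine ⟨fun y => (hdvd y).choose, r, hr, fun y => ?_⟩
  have := (hdvd y).choose_spec
  linear_combination this

lemma FSP.periodic_tail_dvd (T : ℕ) (hT : 1 ≤ T) (s : ℕ) (hs : s < p ^ T)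
    (z : ℤ_[p]) (hz : z = (s : ℤ_[p]) + (p : ℤ_[p]) ^ T * z) (t : ℕ) :
    (p : ℤ_[p]) ^ t ∣
      z - ∑ j ∈ range t, ((s / p ^ (j % T) % p : ℕ) : ℤ_[p]) * (p : ℤ_[p]) ^ j := by
  set C : ℕ → ℤ_[p] :=
    fun t => ∑ j ∈ range t, ((s / p ^ (j % T) % p : ℕ) : ℤ_[p]) * (p : ℤ_[p]) ^ j with hC
  show (p : ℤ_[p]) ^ t ∣ z - C t
  have hpart : ∀ q u, u ≤ T →
      ∑ j ∈ range u, ((s / p ^ ((T * q + j) % T) % p : ℕ) : ℤ_[p]) * (p : ℤ_[p]) ^ (T * q + j)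
        = (p : ℤ_[p]) ^ (T * q) * ((s % p ^ u : ℕ) : ℤ_[p]) := by
    intro q u hu
    have h1 : ∀ j ∈ range u,
        ((s / p ^ ((T * q + j) % T) % p : ℕ) : ℤ_[p]) * (p : ℤ_[p]) ^ (T * q + j)
        = (p : ℤ_[p]) ^ (T * q) * (((s / p ^ j % p : ℕ) : ℤ_[p]) * (p : ℤ_[p]) ^ j) := by
      intro j hj
      have hjT : j < T := lt_of_lt_of_le (mem_range.mp hj) hu
      rw [Nat.mul_add_mod, Nat.mod_eq_of_lt hjT, pow_add]
      ring
    rw [Finset.sum_congr rfl h1, ← Finset.mul_sum]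
    congr 1
    have h2 := FSP.digit_sum_mod (p := p) s u
    push_cast [← h2]
    norm_cast
  have hblock : ∀ q, z - C (T * q) = (p : ℤ_[p]) ^ (T * q) * z := by
    intro q
    induction q with
    | zero => simp [hC]
    | succ q ih =>
      have e1 : T * (q + 1) = T * q + T := by ring
      have e2 : C (T * q + T) = C (T * q)
          + ∑ j ∈ range T, ((s / p ^ ((T * q + j) % T) % p : ℕ) : ℤ_[p]) * (p : ℤ_[p]) ^ (T * q + j) := by
        rw [hC]
        exact Finset.sum_range_add _ (T * q) T
      have e3 : C (T * (q + 1)) = C (T * q) + (p : ℤ_[p]) ^ (T * q) * (s : ℤ_[p]) := by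
        rw [e1, e2, hpart q T le_rfl, Nat.mod_eq_of_lt hs]
      rw [e3]
      have e4 : z - (C (T * q) + (p : ℤ_[p]) ^ (T * q) * (s : ℤ_[p]))
          = (z - C (T * q)) - (p : ℤ_[p]) ^ (T * q) * (s : ℤ_[p]) := by ring
      rw [e4, ih, e1, pow_add]
      have hzs : z - (s : ℤ_[p]) = (p : ℤ_[p]) ^ T * z := by linear_combination hz
      calc (p : ℤ_[p]) ^ (T * q) * z - (p : ℤ_[p]) ^ (T * q) * (s : ℤ_[p])
          = (p : ℤ_[p]) ^ (T * q) * (z - (s : ℤ_[p])) := by ring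
        _ = (p : ℤ_[p]) ^ (T * q) * ((p : ℤ_[p]) ^ T * z) := by rw [hzs]
        _ = (p : ℤ_[p]) ^ (T * q) * (p : ℤ_[p]) ^ T * z := by ring
  have hu : t % T < T := Nat.mod_lt _ (by omega)
  have ht : t = T * (t / T) + t % T := (Nat.div_add_mod t T).symm
  have e4 : C t = C (T * (t / T)) + (p : ℤ_[p]) ^ (T * (t / T)) * ((s % p ^ (t % T) : ℕ) : ℤ_[p]) := by
    conv_lhs => rw [ht]
    simp only [hC]
    rw [Finset.sum_range_add _ (T * (t / T)) (t % T)]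
    rw [hpart (t / T) (t % T) hu.le]
  have e5 : z - C t = (p : ℤ_[p]) ^ (T * (t / T)) * (z - ((s % p ^ (t % T) : ℕ) : ℤ_[p])) := by
    rw [e4]
    have := hblock (t / T)
    linear_combination this
  rw [e5]
  have d1 : (p : ℤ_[p]) ^ (t % T) ∣ z - ((s % p ^ (t % T) : ℕ) : ℤ_[p]) := by
    have hd : (s : ℤ_[p]) - ((s % p ^ (t % T) : ℕ) : ℤ_[p])
        = (p : ℤ_[p]) ^ (t % T) * ((s / p ^ (t % T) : ℕ) : ℤ_[p]) := by
      have h7 : ((s % p ^ (t % T) : ℕ) : ℤ_[p]) + (p : ℤ_[p]) ^ (t % T) * ((s / p ^ (t % T) : ℕ) : ℤ_[p]) = (s : ℤ_[p]) := by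
        exact_mod_cast congrArg (Nat.cast : ℕ → ℤ_[p]) (Nat.mod_add_div s (p ^ (t % T)))
      linear_combination -h7
    have e6 : z - ((s % p ^ (t % T) : ℕ) : ℤ_[p])
        = (p : ℤ_[p]) ^ T * z + ((s : ℤ_[p]) - ((s % p ^ (t % T) : ℕ) : ℤ_[p])) := by
      linear_combination hz
    rw [e6, hd]
    exact dvd_add (dvd_mul_of_dvd_left (pow_dvd_pow _ hu.le) _) (Dvd.intro _ rfl)
  calc (p : ℤ_[p]) ^ t = (p : ℤ_[p]) ^ (T * (t / T)) * (p : ℤ_[p]) ^ (t % T) := by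
        rw [← pow_add, ← ht]
    _ ∣ (p : ℤ_[p]) ^ (T * (t / T)) * (z - ((s % p ^ (t % T) : ℕ) : ℤ_[p])) :=
        mul_dvd_mul_left _ d1

end FSPAux

/-- A 1-Lipschitz `f : ℤ_p → ℤ_p` with finitely many sections maps elements with
eventually periodic digit expansion to elements with eventually periodic digit
expansion. -/
theorem finite_state_preserves_eventually_periodic (p : ℕ) [Fact p.Prime]
    (f : PadicInt p → PadicInt p)
    (hf : ∀ x y : PadicInt p, ‖f x - f y‖ ≤ ‖x - y‖)
    (hfin : (SectionsSet p f).Finite) :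
    ∀ x : PadicInt p, HasEventuallyPeriodicDigits p x →
      HasEventuallyPeriodicDigits p (f x) := by
  have hpp : p.Prime := Fact.out
  intro x hx
  obtain ⟨a, ha, hxa, l, m, hm1, hper⟩ := hx
  set mseq : ℕ → ℕ := fun n => ∑ i ∈ range n, a i * p ^ i with hmseq
  have hmlt : ∀ n, mseq n < p ^ n := fun n => FSP.digit_sum_lt a ha n
  set y : ℕ → ℤ_[p] := fun n => ∑' i, (a (i + n) : ℤ_[p]) * (p : ℤ_[p]) ^ i with hy
  have hsum : ∀ n, Summable (fun i => (a (i + n) : ℤ_[p]) * (p : ℤ_[p]) ^ i) :=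
    fun n => FSP.summable_digits _
  have hsplit : ∀ n, x = (mseq n : ℤ_[p]) + (p : ℤ_[p]) ^ n * y n := by
    intro n
    have h1 := Summable.sum_add_tsum_nat_add (f := fun i => (a i : ℤ_[p]) * (p : ℤ_[p]) ^ i) n
      (FSP.summable_digits a)
    have h2 : ∑' i, (a (i + n) : ℤ_[p]) * (p : ℤ_[p]) ^ (i + n) = (p : ℤ_[p]) ^ n * y n := by
      calc ∑' i, (a (i + n) : ℤ_[p]) * (p : ℤ_[p]) ^ (i + n)
          = ∑' i, (p : ℤ_[p]) ^ n * ((a (i + n) : ℤ_[p]) * (p : ℤ_[p]) ^ i) := by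
            apply tsum_congr; intro i; rw [pow_add]; ring
        _ = (p : ℤ_[p]) ^ n * y n := (hsum n).tsum_mul_left _
    rw [hxa, ← h1, h2]
    congr 1
    rw [hmseq]
    push_cast
    rfl
  choose g hg using fun n => FSP.exists_section f hf n (mseq n)
  choose r hrlt heq using hg
  have fval : ∀ n, f x = (r n : ℤ_[p]) + (p : ℤ_[p]) ^ n * g n (y n) := by
    intro n
    conv_lhs => rw [hsplit n]
    exact heq n (y n)
  have hy1 : ∀ n, l ≤ n → y (n + m) = y n := by
    intro n hn
    apply tsum_congr
    intro i
    have e : i + (n + m) = (i + n) + m := by ring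
    rw [e, hper (i + n) (le_trans hn (Nat.le_add_left n i))]
  have hyc : ∀ c, y (l + c * m) = y l := by
    intro c
    induction c with
    | zero => simp
    | succ c ih =>
      have e : l + (c + 1) * m = (l + c * m) + m := by ring
      rw [e, hy1 (l + c * m) (Nat.le_add_right l _), ih]
  have hmap : Set.MapsTo (fun c : ℕ => g (l + c * m)) Set.univ (SectionsSet p f) :=
    fun c _ => ⟨l + c * m, mseq (l + c * m), hmlt _, r _, hrlt _, heq _⟩
  obtain ⟨c₁, -, c₂, -, hne, hgeq⟩ :=
    Set.infinite_univ.exists_ne_map_eq_of_mapsTo hmap hfin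
  obtain ⟨d₁, d₂, hd, hgd⟩ : ∃ d₁ d₂, d₁ < d₂ ∧ g (l + d₁ * m) = g (l + d₂ * m) := by
    rcases lt_or_gt_of_ne hne with h | h
    exacts [⟨c₁, c₂, h, hgeq⟩, ⟨c₂, c₁, h, hgeq.symm⟩]
  set N := l + d₁ * m with hN
  set N' := l + d₂ * m with hN'
  have hNN' : N < N' := by
    have : d₁ * m < d₂ * m := (Nat.mul_lt_mul_right hm1).mpr hd
    omega
  set T := N' - N with hTd
  have hT1 : 1 ≤ T := by omega
  have hNT : N' = N + T := by omega
  have hyN : y N' = y N := by rw [hN, hN', hyc, hyc]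
  set z := g N (y N) with hzdef
  have fvN : f x = (r N : ℤ_[p]) + (p : ℤ_[p]) ^ N * z := fval N
  have fvN' : f x = (r N' : ℤ_[p]) + (p : ℤ_[p]) ^ N' * z := by
    rw [fval N', hyN, ← hgd]
  have hpow : (p : ℤ_[p]) ^ N' = (p : ℤ_[p]) ^ N * (p : ℤ_[p]) ^ T := by rw [hNT, pow_add]
  have hdvdN : ((p : ℤ) ^ N) ∣ ((r N' : ℤ) - (r N : ℤ)) := by
    rw [← PadicInt.pow_p_dvd_int_iff]
    push_cast
    have e : ((r N' : ℤ_[p]) - (r N : ℤ_[p])) = (p : ℤ_[p]) ^ N * (z - (p : ℤ_[p]) ^ T * z) := by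
      linear_combination fvN - fvN' - z * hpow
    rw [e]
    exact Dvd.intro _ rfl
  obtain ⟨s', hs'⟩ := hdvdN
  have hppos : (0 : ℤ) < (p : ℤ) := by exact_mod_cast hpp.pos
  have hpNpos : (0 : ℤ) < (p : ℤ) ^ N := pow_pos hppos N
  have hrNlt : ((r N : ℤ)) < (p : ℤ) ^ N := by exact_mod_cast hrlt N
  have hrN'lt : ((r N' : ℤ)) < (p : ℤ) ^ N * (p : ℤ) ^ T := by
    have := hrlt N'
    have e : (p : ℤ) ^ N * (p : ℤ) ^ T = (p : ℤ) ^ N' := by rw [← pow_add, ← hNT]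
    rw [e]; exact_mod_cast this
  have hs'nonneg : (0 : ℤ) ≤ s' := by
    rcases le_or_gt 0 s' with h | h
    · exact h
    · exfalso
      have h1 : s' ≤ -1 := by omega
      have h2 : (p : ℤ) ^ N * s' ≤ (p : ℤ) ^ N * (-1) := by
        exact mul_le_mul_of_nonneg_left h1 hpNpos.le
      have h3 : (0 : ℤ) ≤ (r N' : ℤ) := Int.natCast_nonneg _
      nlinarith
  have hs'lt : s' < (p : ℤ) ^ T := by
    by_contra h
    push_neg at h
    have h2 : (p : ℤ) ^ N * (p : ℤ) ^ T ≤ (p : ℤ) ^ N * s' :=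
      mul_le_mul_of_nonneg_left h hpNpos.le
    have h3 : (0 : ℤ) ≤ (r N : ℤ) := Int.natCast_nonneg _
    nlinarith
  set s : ℕ := s'.toNat with hsdef
  have hscast : (s : ℤ) = s' := Int.toNat_of_nonneg hs'nonneg
  have hsT : s < p ^ T := by
    have : (s : ℤ) < (p : ℤ) ^ T := by rw [hscast]; exact hs'lt
    exact_mod_cast this
  have hrr : (r N' : ℤ_[p]) = (r N : ℤ_[p]) + (p : ℤ_[p]) ^ N * (s : ℤ_[p]) := by
    have h1 : ((r N' : ℤ) : ℤ_[p]) = ((r N : ℤ) : ℤ_[p]) + ((p : ℤ) ^ N * s' : ℤ) := by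
      exact_mod_cast congrArg (fun t : ℤ => (t : ℤ_[p])) (by linarith [hs'] : (r N' : ℤ) = (r N : ℤ) + (p : ℤ) ^ N * s')
    rw [← hscast] at h1
    push_cast at h1 ⊢
    exact h1
  have hzz : z = (s : ℤ_[p]) + (p : ℤ_[p]) ^ T * z := by
    have hcancel : (p : ℤ_[p]) ^ N * z = (p : ℤ_[p]) ^ N * ((s : ℤ_[p]) + (p : ℤ_[p]) ^ T * z) := by
      linear_combination fvN' - fvN + z * hpow + hrr
    exact mul_left_cancel₀ (pow_ne_zero _ (Nat.cast_ne_zero.mpr hpp.ne_zero)) hcancel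
  set b : ℕ → ℕ := fun i => if i < N then r N / p ^ i % p else s / p ^ ((i - N) % T) % p with hb
  have hblt : ∀ i, b i < p := by
    intro i; rw [hb]; dsimp only
    split <;> exact Nat.mod_lt _ hpp.pos
  refine ⟨b, hblt, ?_, N, T, hT1, ?_⟩
  · apply FSP.eq_tsum_of_dvd
    intro n
    rcases le_or_gt n N with hn | hn
    · have hbsum : ∑ i ∈ range n, (b i : ℤ_[p]) * (p : ℤ_[p]) ^ i
          = ((r N % p ^ n : ℕ) : ℤ_[p]) := by
        have h1 : ∀ i ∈ range n, (b i : ℤ_[p]) * (p : ℤ_[p]) ^ i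
            = ((r N / p ^ i % p : ℕ) : ℤ_[p]) * (p : ℤ_[p]) ^ i := by
          intro i hi
          rw [hb]; dsimp only
          rw [if_pos (lt_of_lt_of_le (mem_range.mp hi) hn)]
        rw [Finset.sum_congr rfl h1]
        have h2 := FSP.digit_sum_mod (p := p) (r N) n
        push_cast [← h2]
        norm_cast
      rw [hbsum]
      have e : f x - ((r N % p ^ n : ℕ) : ℤ_[p])
          = (p : ℤ_[p]) ^ N * z + ((r N : ℤ_[p]) - ((r N % p ^ n : ℕ) : ℤ_[p])) := by
        linear_combination fvN
      rw [e]
      apply dvd_add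
      · exact dvd_mul_of_dvd_left (pow_dvd_pow _ hn) _
      · have h7 : ((r N % p ^ n : ℕ) : ℤ_[p]) + (p : ℤ_[p]) ^ n * ((r N / p ^ n : ℕ) : ℤ_[p])
            = (r N : ℤ_[p]) := by
          exact_mod_cast congrArg (Nat.cast : ℕ → ℤ_[p]) (Nat.mod_add_div (r N) (p ^ n))
        have e2 : (r N : ℤ_[p]) - ((r N % p ^ n : ℕ) : ℤ_[p])
            = (p : ℤ_[p]) ^ n * ((r N / p ^ n : ℕ) : ℤ_[p]) := by linear_combination -h7
        rw [e2]
        exact Dvd.intro _ rfl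
    · set t := n - N with htdef
      have hnt : n = N + t := by omega
      have hbsum : ∑ i ∈ range n, (b i : ℤ_[p]) * (p : ℤ_[p]) ^ i
          = (r N : ℤ_[p])
            + (p : ℤ_[p]) ^ N * ∑ j ∈ range t, ((s / p ^ (j % T) % p : ℕ) : ℤ_[p]) * (p : ℤ_[p]) ^ j := by
        conv_lhs => rw [hnt]
        rw [Finset.sum_range_add]
        congr 1
        · have h1 : ∀ i ∈ range N, (b i : ℤ_[p]) * (p : ℤ_[p]) ^ i
              = ((r N / p ^ i % p : ℕ) : ℤ_[p]) * (p : ℤ_[p]) ^ i := by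
            intro i hi
            rw [hb]; dsimp only
            rw [if_pos (mem_range.mp hi)]
          rw [Finset.sum_congr rfl h1]
          have h2 := FSP.digit_sum_mod (p := p) (r N) N
          rw [Nat.mod_eq_of_lt (hrlt N)] at h2
          have h3 := congrArg (Nat.cast : ℕ → ℤ_[p]) h2
          push_cast at h3
          exact h3
        · rw [Finset.mul_sum]
          apply Finset.sum_congr rfl
          intro j _
          rw [hb]; dsimp only
          rw [if_neg (by omega)]
          have e3 : N + j - N = j := by omega
          rw [e3, pow_add]
          ring
      rw [hbsum]
      have e : f x - ((r N : ℤ_[p])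
            + (p : ℤ_[p]) ^ N * ∑ j ∈ range t, ((s / p ^ (j % T) % p : ℕ) : ℤ_[p]) * (p : ℤ_[p]) ^ j)
          = (p : ℤ_[p]) ^ N
            * (z - ∑ j ∈ range t, ((s / p ^ (j % T) % p : ℕ) : ℤ_[p]) * (p : ℤ_[p]) ^ j) := by
        linear_combination fvN
      rw [hnt, pow_add, e]
      exact mul_dvd_mul_left _ (FSP.periodic_tail_dvd T hT1 s hsT z hzz t)
  · intro i hi
    rw [hb]; dsimp only
    rw [if_neg (by omega), if_neg (by omega)]
    have e : i + T - N = (i - N) + T := by omega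
    rw [e, Nat.add_mod_right]
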